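/- arXiv:2512.18868 — 2 statements merged into one kernel-verified Lean document; each statement's English description precedes it below -/
import Mathlib

section
/- Let $D$ be a Dedekind domain (a Noetherian integrally closed domain of Krull dimension at most 1). Then $D(x)$, the localization of $D[x]$ at the multiplicative set of monic polynomials, is again a Dedekind domain. -/
open Polynomial nonZeroDivisors

/-- The multiplicative set of monic polynomials over a commutative ring. -/
def monicSubmonoid (A : Type*) [CommRing A] : Submonoid (Polynomial A) where
  carrier := {f | f.Monic}
  mul_mem' hf hg := hf.mul hg
  one_mem' := Polynomial.monic_one

section PolyLocalization

variable {R : Type*} [CommRing R] (M : Submonoid R) (S : Type*) [CommRing S] [Algebra R S]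
  [IsLocalization M S]

/-- If `S` is the localization of `R` at `M`, then `S[X]` is the localization of `R[X]`
at `M.map C`. -/
theorem Polynomial.isLocalization_map_C [Algebra R[X] S[X]]
    (halg : algebraMap R[X] S[X] = mapRingHom (algebraMap R S)) :
    IsLocalization (M.map (C : R →+* R[X])) S[X] where
  map_units := by
    rintro ⟨_, q, hq, rfl⟩
    rw [halg]
    simpa using (IsLocalization.map_units S ⟨q, hq⟩).map (C : S →+* S[X])
  surj p := by
    simp only [halg, Prod.exists, Subtype.exists, Submonoid.mem_map, exists_prop,
      exists_exists_and_eq_and, coe_mapRingHom, map_C]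
    refine Polynomial.induction_on' p ?_ ?_
    · intro p p' ⟨x, m, hm, hxm⟩ ⟨x', m', hm', hxm'⟩
      refine ⟨x * C m' + x' * C m, m * m', M.mul_mem hm hm', ?_⟩
      simp only [Polynomial.map_add, Polynomial.map_mul, map_C, map_mul]
      rw [← hxm, ← hxm']
      ring
    · intro u s
      obtain ⟨⟨r, m⟩, hr⟩ := IsLocalization.surj M s
      refine ⟨monomial u r, m, m.property, ?_⟩
      simp only [map_monomial]
      rw [← hr, mul_comm, C_mul_monomial, mul_comm]
  exists_of_eq {p q} := by
    intro h
    rw [halg] at h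
    have h' : ∀ n, algebraMap R S (p.coeff n) = algebraMap R S (q.coeff n) := by
      intro n
      have := congrArg (fun r => Polynomial.coeff r n) h
      simpa using this
    choose c hc using fun n => IsLocalization.exists_of_eq (M := M) (h' n)
    classical
    refine ⟨⟨C (((p.support ∪ q.support).prod fun m => (c m : R)) : R),
      Submonoid.mem_map_of_mem C (Submonoid.prod_mem M fun m _ => (c m).property)⟩, ?_⟩
    ext m
    simp only [coeff_C_mul]
    by_cases hm : m ∈ p.support ∪ q.support
    · exact Finset.prod_mul_eq_prod_mul_of_exists m hm (hc m)
    · simp only [Finset.mem_union, mem_support_iff, ne_eq, not_or, Decidable.not_not] at hm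
      rw [hm.left, hm.right]

end PolyLocalization

section IntegrallyClosed

variable {D : Type*} [CommRing D] [IsDomain D] [IsIntegrallyClosed D]
variable {K : Type*} [Field K] [Algebra D K] [IsFractionRing D K]

/-- A polynomial in `K[X]` integral over `D[X]` comes from `D[X]`, when `D` is
integrally closed with fraction field `K`. -/
theorem Polynomial.exists_map_eq_of_isIntegral [Algebra D[X] K[X]]
    (halg : algebraMap D[X] K[X] = mapRingHom (algebraMap D K))
    {g : K[X]} (hg : IsIntegral D[X] g) :
    ∃ p : D[X], algebraMap D[X] K[X] p = g := by
  obtain ⟨f, hf, hev⟩ := hg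
  -- `f` has positive degree.
  have hfd : 0 < f.natDegree := by
    rcases Nat.eq_zero_or_pos f.natDegree with h0 | h; swap; · exact h
    exfalso
    rw [(hf.natDegree_eq_zero).mp h0] at hev
    simpa using hev
  set n : ℕ := max g.natDegree (f.support.sup fun i => (f.coeff i).natDegree) with hn
  set r : ℕ := n + 1 with hr
  -- the "constant term after translation" `c`:
  set c : D[X] := f.eval ((X : D[X]) ^ r) with hcdef
  have hB : ∀ i, ((f.coeff i).natDegree : ℕ) ≤ n := by
    intro i
    by_cases hi : i ∈ f.support
    · exact le_trans (Finset.le_sup (f := fun i => (f.coeff i).natDegree) hi) (le_max_right _ _)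
    · simp [Polynomial.notMem_support_iff.mp hi]
  -- `c` is monic.
  have hre : c = f.eraseLead.eval ((X : D[X]) ^ r) + X ^ (r * f.natDegree) := by
    conv_lhs => rw [hcdef, ← f.eraseLead_add_C_mul_X_pow]
    rw [eval_add, eval_mul, eval_C, hf.leadingCoeff, one_mul, eval_pow, eval_X, ← pow_mul]
  have hdeg : (f.eraseLead.eval ((X : D[X]) ^ r)).degree < ((r * f.natDegree : ℕ) : WithBot ℕ) := by
    rw [eval_eq_sum, Polynomial.sum_def]
    refine lt_of_le_of_lt (degree_sum_le _ _) ?_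
    rw [Finset.sup_lt_iff (by exact_mod_cast WithBot.bot_lt_coe _)]
    intro i hi
    have hilt : i < f.natDegree := Polynomial.lt_natDegree_of_mem_eraseLead_support hi
    refine lt_of_le_of_lt (degree_mul_le _ _) ?_
    have h1 : (f.eraseLead.coeff i).degree ≤ (n : WithBot ℕ) := by
      refine le_trans degree_le_natDegree ?_
      rw [Polynomial.eraseLead_coeff_of_ne i hilt.ne]
      exact_mod_cast hB i
    have h2 : (((X : D[X]) ^ r) ^ i).degree = ((r * i : ℕ) : WithBot ℕ) := by
      rw [← pow_mul, degree_X_pow]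
    refine lt_of_le_of_lt (add_le_add h1 (le_of_eq h2)) ?_
    rw [← Nat.cast_add]
    exact_mod_cast calc
      n + r * i < r + r * i := by omega
      _ = r * (i + 1) := by ring
      _ ≤ r * f.natDegree := Nat.mul_le_mul_left r hilt
  have hc : c.Monic := by
    rw [hre, add_comm]
    exact monic_X_pow_add hdeg
  -- divisibility: `X ^ r - g` divides `c.map (algebraMap D K)`
  set φ := algebraMap D[X] K[X] with hφ
  set f1 := f.comp (X + C ((X : D[X]) ^ r)) with hf1def
  have hφX : φ ((X : D[X]) ^ r) = X ^ r := by
    rw [halg]; simp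
  have hf1 : eval₂ φ (g - X ^ r) f1 = 0 := by
    rw [hf1def, eval₂_comp, eval₂_add, eval₂_X, eval₂_C, hφX, sub_add_cancel]
    exact hev
  have hc0 : f1.coeff 0 = c := by
    rw [coeff_zero_eq_eval_zero, hf1def, eval_comp, eval_add, eval_X, eval_C, zero_add, hcdef]
  have hdvd0 : (g - X ^ r) ∣ φ c := by
    refine ⟨-(eval₂ φ (g - X ^ r) f1.divX), ?_⟩
    have h2 := congrArg (eval₂ φ (g - X ^ r)) f1.divX_mul_X_add
    rw [hf1, eval₂_add, eval₂_mul, eval₂_X, eval₂_C, hc0] at h2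
    linear_combination h2
  have hdvd : (X ^ r - g) ∣ c.map (algebraMap D K) := by
    have : φ c = c.map (algebraMap D K) := by rw [halg]; rfl
    rw [← this, ← neg_sub g ((X : K[X]) ^ r), neg_dvd]
    exact hdvd0
  obtain ⟨p', hp'⟩ := IsIntegrallyClosed.eq_map_mul_C_of_dvd K hc hdvd
  have hmon : ((X : K[X]) ^ r - g).Monic :=
    monic_X_pow_sub (lt_of_le_of_lt degree_le_natDegree
      (by exact_mod_cast Nat.lt_succ_of_le (le_max_left _ _)))
  rw [hmon.leadingCoeff, map_one, mul_one] at hp'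
  refine ⟨X ^ r - p', ?_⟩
  rw [halg]
  push_cast [coe_mapRingHom, Polynomial.map_sub, Polynomial.map_pow, map_X]
  rw [hp']
  ring

/-- If `D` is an integrally closed domain, so is `D[X]`. -/
theorem Polynomial.isIntegrallyClosed_polynomial :
    IsIntegrallyClosed D[X] := by
  let K' := FractionRing D
  letI : Algebra D[X] K'[X] := (mapRingHom (algebraMap D K')).toAlgebra
  have halg : algebraMap D[X] K'[X] = mapRingHom (algebraMap D K') := rfl
  haveI : IsLocalization ((D⁰).map (C : D →+* D[X])) K'[X] :=
    Polynomial.isLocalization_map_C _ _ halg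
  have hM0 : (D⁰).map (C : D →+* D[X]) ≤ (D[X])⁰ := by
    rintro _ ⟨d, hd, rfl⟩
    exact mem_nonZeroDivisors_of_ne_zero
      (by simpa using nonZeroDivisors.ne_zero hd)
  let F := FractionRing D[X]
  let gmap : K'[X] →+* F := IsLocalization.map (T := (D[X])⁰) F (RingHom.id D[X]) hM0
  letI := gmap.toAlgebra
  haveI : IsScalarTower D[X] K'[X] F := IsScalarTower.of_algebraMap_eq'
    (by rw [RingHom.algebraMap_toAlgebra]; exact (IsLocalization.map_comp (M := (D⁰).map (C : D →+* D[X])) (S := K'[X]) (T := (D[X])⁰) (Q := F) (g := RingHom.id D[X]) hM0).symm)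
  haveI : IsFractionRing K'[X] F :=
    IsFractionRing.isFractionRing_of_isDomain_of_isLocalization ((D⁰).map (C : D →+* D[X]))
      K'[X] F
  rw [isIntegrallyClosed_iff F]
  intro x hx
  have hxK : IsIntegral K'[X] x := hx.tower_top
  obtain ⟨g, rfl⟩ := IsIntegrallyClosed.isIntegral_iff.mp hxK
  have hg : IsIntegral D[X] g :=
    (isIntegral_algHom_iff (IsScalarTower.toAlgHom D[X] K'[X] F)
      (IsFractionRing.injective K'[X] F)).mp hx
  obtain ⟨p, hp⟩ := Polynomial.exists_map_eq_of_isIntegral halg hg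
  exact ⟨p, by rw [IsScalarTower.algebraMap_apply D[X] K'[X] F, hp]⟩

end IntegrallyClosed

section Dimension

variable {D : Type*} [CommRing D] [IsDedekindDomain D]

/-- If `q` is a prime of `D[X]` lying strictly above `m·D[X]` for a maximal ideal `m` of `D`,
then `q` contains a monic polynomial. -/
theorem exists_monic_mem_of_map_C_lt {q : Ideal D[X]} (hq : q.IsPrime)
    {m : Ideal D} (hm : m.IsMaximal)
    (hlt : Ideal.map (C : D →+* D[X]) m < q) : ∃ h ∈ q, h.Monic := by
  haveI : m.IsMaximal := hm
  letI : Field (D ⧸ m) := Ideal.Quotient.field m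
  set π : D[X] →+* (D ⧸ m)[X] := mapRingHom (Ideal.Quotient.mk m) with hπ
  have hπs : Function.Surjective π := Polynomial.map_surjective _ Ideal.Quotient.mk_surjective
  have hker : RingHom.ker π = Ideal.map (C : D →+* D[X]) m := by
    rw [hπ, Polynomial.ker_mapRingHom, Ideal.mk_ker]
  have hkerq : RingHom.ker π ≤ q := by rw [hker]; exact hlt.le
  set qq := q.map π with hqq
  haveI hqqp : qq.IsPrime := Ideal.map_isPrime_of_surjective hπs hkerq
  obtain ⟨x, hxq, hxm⟩ := SetLike.exists_of_lt hlt
  have hx0 : π x ≠ 0 := by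
    rw [Ne, ← RingHom.mem_ker, hker]; exact hxm
  set gbar := π x * C (π x).leadingCoeff⁻¹ with hgbardef
  have hgbar : gbar.Monic := monic_mul_leadingCoeff_inv hx0
  have hgbarq : gbar ∈ qq := Ideal.mul_mem_right _ _ (Ideal.mem_map_of_mem _ hxq)
  set d := gbar.natDegree with hd
  obtain ⟨h0, hh0q, hh0⟩ := Ideal.mem_map_iff_of_surjective π hπs |>.mp hgbarq
  have hwdeg : (gbar - X ^ d).degree < (d : WithBot ℕ) := by
    by_cases hw : gbar - X ^ d = 0
    · rw [hw, degree_zero]; exact WithBot.bot_lt_coe _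
    · have := degree_sub_lt (by rw [degree_X_pow, degree_eq_natDegree hgbar.ne_zero])
        hgbar.ne_zero (by rw [hgbar.leadingCoeff, leadingCoeff_X_pow])
      rwa [degree_eq_natDegree hgbar.ne_zero] at this
  obtain ⟨v, hv_map, hv_deg⟩ := Polynomial.mem_lifts_and_degree_eq
    ((Polynomial.lifts_iff_coeff_lifts _).mpr
      (fun nn => Set.mem_range.mpr ⟨Ideal.Quotient.mk_surjective _ |>.choose,
        Ideal.Quotient.mk_surjective _ |>.choose_spec⟩) :
      gbar - X ^ d ∈ Polynomial.lifts (Ideal.Quotient.mk m))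
  refine ⟨X ^ d + v, ?_, monic_X_pow_add (hv_deg ▸ hwdeg)⟩
  have hπh : π (X ^ d + v) = π h0 := by
    rw [hh0]
    have : π v = gbar - X ^ d := hv_map
    rw [map_add, this, map_pow, hπ, coe_mapRingHom, map_X]
    ring
  have : (X ^ d + v) - h0 ∈ RingHom.ker π := by
    rw [RingHom.mem_ker, map_sub, hπh, sub_self]
  have := q.add_mem (hkerq this) hh0q
  simpa using this

/-- Descent: a prime of `D[X]` contracting to `⊥` in `D` and contained in `m·D[X]`
for some nonzero ideal `m ≠ ⊤` must be zero. -/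
theorem eq_bot_of_le_map_C {p : Ideal D[X]} (hp : p.IsPrime)
    (hp0 : Ideal.comap (C : D →+* D[X]) p = ⊥)
    {m : Ideal D} (hm : m ≠ ⊥) (hmt : m ≠ ⊤)
    (hle : p ≤ Ideal.map (C : D →+* D[X]) m) : p = ⊥ := by
  obtain ⟨d, hdm, hd0⟩ := Submodule.exists_mem_ne_zero_of_ne_bot hm
  obtain ⟨m', hm'⟩ : m ∣ Ideal.span {d} :=
    Ideal.dvd_iff_le.mpr ((Ideal.span_singleton_le_iff_mem _).mpr hdm)
  have hCd : ∀ k : ℕ, C (d ^ k) ∉ p := by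
    intro k hk
    have : d ^ k ∈ Ideal.comap (C : D →+* D[X]) p := hk
    rw [hp0, Ideal.mem_bot] at this
    exact hd0 (pow_eq_zero_iff'.mp this).1
  have key : ∀ k : ℕ, ∀ f ∈ p, ∀ i, f.coeff i ∈ m ^ k := by
    intro k
    induction k with
    | zero => intro f _ i; simp
    | succ k ih =>
      intro f hf i
      have hpowEq : m' ^ k * m ^ k = Ideal.span {d ^ k} := by
        rw [← mul_pow, mul_comm m' m, ← hm', Ideal.span_singleton_pow]
      have step : ∀ g ∈ m' ^ k, g * f.coeff i ∈ Ideal.span {d ^ k} * m := by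
        intro g hg
        obtain ⟨h, hh⟩ : C (d ^ k) ∣ C g * f := by
          rw [C_dvd_iff_dvd_coeff]
          intro j
          rw [coeff_C_mul]
          have : g * f.coeff j ∈ m' ^ k * m ^ k := Ideal.mul_mem_mul hg (ih f hf j)
          rwa [hpowEq, Ideal.mem_span_singleton] at this
        have hhp : h ∈ p := by
          have hmem : C (d ^ k) * h ∈ p := by rw [← hh]; exact Ideal.mul_mem_left _ _ hf
          rcases hp.mem_or_mem hmem with h1 | h2
          · exact absurd h1 (hCd k)
          · exact h2
        have hcoeffm : h.coeff i ∈ m := by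
          have := hle hhp
          rw [Ideal.mem_map_C_iff] at this
          exact this i
        have hco : g * f.coeff i = d ^ k * h.coeff i := by
          have := congrArg (fun q : D[X] => q.coeff i) hh
          simpa only [coeff_C_mul, ← C_pow] using this
        rw [hco]
        exact Ideal.mul_mem_mul (Ideal.mem_span_singleton_self _) hcoeffm
      have step2 : Ideal.span {f.coeff i} * m' ^ k ≤ Ideal.span {d ^ k} * m := by
        rw [Ideal.mul_le]
        rintro r hr s hs
        obtain ⟨t, rfl⟩ := Ideal.mem_span_singleton.mp hr
        have : s * f.coeff i ∈ Ideal.span {d ^ k} * m := step s hs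
        have := Ideal.mul_mem_left _ t this
        convert this using 1
        ring
      have step3 : f.coeff i * d ^ k ∈ Ideal.span {d ^ k} * m ^ (k + 1) := by
        have h1 : Ideal.span {f.coeff i} * (m' ^ k * m ^ k) ≤
            Ideal.span {d ^ k} * (m * m ^ k) := by
          calc Ideal.span {f.coeff i} * (m' ^ k * m ^ k)
              = (Ideal.span {f.coeff i} * m' ^ k) * m ^ k := by ring
            _ ≤ (Ideal.span {d ^ k} * m) * m ^ k := Ideal.mul_mono_left step2
            _ = Ideal.span {d ^ k} * (m * m ^ k) := by ring
        rw [hpowEq] at h1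
        have hmm : m * m ^ k = m ^ (k + 1) := (pow_succ' m k).symm
        rw [hmm] at h1
        exact h1 (Ideal.mul_mem_mul (Ideal.mem_span_singleton_self _)
          (Ideal.mem_span_singleton_self _))
      obtain ⟨z, hz, hze⟩ := Submodule.mem_span_singleton_mul.mp step3
      have : f.coeff i = z :=
        mul_left_cancel₀ (pow_ne_zero k hd0) (by linear_combination -hze)
      rw [this]; exact hz
  by_contra hbot
  obtain ⟨f, hfp, hf0⟩ := Submodule.exists_mem_ne_zero_of_ne_bot hbot
  obtain ⟨i, hi⟩ : ∃ i, f.coeff i ≠ 0 := by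
    by_contra hall
    push_neg at hall
    exact hf0 (Polynomial.ext fun i => by simp [hall i])
  have hmem : f.coeff i ∈ ⨅ k : ℕ, m ^ k := Ideal.mem_iInf.mpr fun k => key k f hfp i
  rw [Ideal.iInf_pow_eq_bot_of_isDomain (I := m) hmt] at hmem
  exact hi (by simpa using hmem)

/-- In `D[X]` over a Dedekind domain, there is no chain `⊥ ≠ p < q` of primes
both avoiding monic polynomials. -/
theorem eq_bot_of_chain_of_no_monic {p q : Ideal D[X]} (hp : p.IsPrime) (hq : q.IsPrime)
    (hpq : p < q) (hqmon : ∀ h ∈ q, ¬ Polynomial.Monic h) : p = ⊥ := by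
  set m := Ideal.comap (C : D →+* D[X]) q with hmdef
  haveI hm : m.IsPrime := hq.comap _
  by_cases hm0 : m = ⊥
  · -- both primes survive in `K[X]`
    let K' := FractionRing D
    letI : Algebra D[X] K'[X] := (mapRingHom (algebraMap D K')).toAlgebra
    set M0 := (D⁰).map (C : D →+* D[X]) with hM0def
    haveI : IsLocalization M0 K'[X] := Polynomial.isLocalization_map_C _ _ rfl
    have hM0 : M0 ≤ (D[X])⁰ := by
      rintro _ ⟨d, hd, rfl⟩
      exact mem_nonZeroDivisors_of_ne_zero (by simpa using nonZeroDivisors.ne_zero hd)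
    have hdq : Disjoint (M0 : Set D[X]) (q : Set D[X]) := by
      rw [Set.disjoint_left]
      rintro _ ⟨x, hx, rfl⟩ hcq
      have hxm : x ∈ m := hcq
      rw [hm0, Ideal.mem_bot] at hxm
      exact nonZeroDivisors.ne_zero hx hxm
    have hdp : Disjoint (M0 : Set D[X]) (p : Set D[X]) :=
      hdq.mono_right (by exact_mod_cast hpq.le)
    haveI hQ : (q.map (algebraMap D[X] K'[X])).IsPrime :=
      IsLocalization.isPrime_of_isPrime_disjoint M0 K'[X] q hq hdq
    haveI hP : (p.map (algebraMap D[X] K'[X])).IsPrime :=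
      IsLocalization.isPrime_of_isPrime_disjoint M0 K'[X] p hp hdp
    by_contra hp0
    obtain ⟨f, hfp, hf0⟩ := Submodule.exists_mem_ne_zero_of_ne_bot hp0
    have hPne : p.map (algebraMap D[X] K'[X]) ≠ ⊥ := by
      intro hbot
      have : algebraMap D[X] K'[X] f ∈ (⊥ : Ideal K'[X]) := hbot ▸ Ideal.mem_map_of_mem _ hfp
      rw [Ideal.mem_bot] at this
      exact hf0 (IsLocalization.injective K'[X] hM0 (by simpa using this))
    have hPmax : (p.map (algebraMap D[X] K'[X])).IsMaximal := hP.isMaximal hPne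
    have hlt : p.map (algebraMap D[X] K'[X]) < q.map (algebraMap D[X] K'[X]) := by
      refine lt_of_le_of_ne (Ideal.map_mono hpq.le) fun heq => hpq.ne ?_
      have h1 := IsLocalization.comap_map_of_isPrime_disjoint M0 K'[X] hp hdp
      have h2 := IsLocalization.comap_map_of_isPrime_disjoint M0 K'[X] hq hdq
      rw [← h1, ← h2, heq]
    exact hQ.ne_top (hPmax.1.2 _ hlt)
  · have hmmax : m.IsMaximal := hm.isMaximal hm0
    have hmq : Ideal.map (C : D →+* D[X]) m ≤ q := Ideal.map_le_iff_le_comap.mpr le_rfl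
    have hqm : q = Ideal.map (C : D →+* D[X]) m := by
      by_contra hne
      obtain ⟨h, hh, hmon⟩ := exists_monic_mem_of_map_C_lt hq hmmax
        (lt_of_le_of_ne hmq (Ne.symm hne))
      exact hqmon h hh hmon
    set mp := Ideal.comap (C : D →+* D[X]) p with hmpdef
    haveI hmp : mp.IsPrime := hp.comap _
    by_cases hmp0 : mp = ⊥
    · exact eq_bot_of_le_map_C hp hmp0 hm0 hmmax.ne_top (hqm ▸ hpq.le)
    · exfalso
      have hmpmax : mp.IsMaximal := hmp.isMaximal hmp0
      have hsub : mp ≤ m := Ideal.comap_mono hpq.le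
      have heq : mp = m := hmpmax.eq_of_le hm.ne_top hsub
      have : q ≤ p := hqm ▸ Ideal.map_le_iff_le_comap.mpr (heq ▸ le_rfl)
      exact hpq.not_ge this

end Dimension

/-- If `D` is a Dedekind domain, then `D(x)`, the localization of `D[x]` at the
multiplicative set of monic polynomials, is again a Dedekind domain. -/
theorem monicLocalization_isDedekindDomain (D : Type*) [CommRing D] [IsDedekindDomain D] :
    IsDedekindDomain (Localization (monicSubmonoid D)) := by
  set S := monicSubmonoid D with hSdef
  have hS : S ≤ (D[X])⁰ := fun f hf =>
    mem_nonZeroDivisors_of_ne_zero (Polynomial.Monic.ne_zero hf)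
  haveI : IsDomain (Localization S) := IsLocalization.isDomain_localization hS
  haveI : IsNoetherianRing (Localization S) :=
    IsLocalization.isNoetherianRing S (Localization S) inferInstance
  haveI : IsIntegrallyClosed D[X] := Polynomial.isIntegrallyClosed_polynomial
  haveI : IsIntegrallyClosed (Localization S) :=
    isIntegrallyClosed_of_isLocalization (Localization S) S hS
  haveI : Ring.DimensionLEOne (Localization S) := by
    constructor
    intro P hP0 hP
    refine ⟨⟨hP.ne_top, fun J hJ => ?_⟩⟩
    by_contra hJtop
    obtain ⟨Mx, hMx, hJM⟩ := Ideal.exists_le_maximal J hJtop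
    haveI hMxp : Mx.IsPrime := hMx.isPrime
    set p := Ideal.comap (algebraMap D[X] (Localization S)) P with hpdef
    set q := Ideal.comap (algebraMap D[X] (Localization S)) Mx with hqdef
    haveI hpp : p.IsPrime := hP.comap _
    haveI hqp : q.IsPrime := hMxp.comap _
    have hPM : P < Mx := lt_of_lt_of_le hJ hJM
    have hpq : p < q := by
      refine lt_of_le_of_ne (Ideal.comap_mono hPM.le) fun heq => hPM.ne ?_
      rw [← IsLocalization.map_comap S (Localization S) P,
        ← IsLocalization.map_comap S (Localization S) Mx]; exact congrArg (Ideal.map _) heq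
    have hqmon : ∀ h ∈ q, ¬ Polynomial.Monic h := by
      intro h hh hmon
      have : IsUnit (algebraMap D[X] (Localization S) h) :=
        IsLocalization.map_units (Localization S) (⟨h, hmon⟩ : S)
      exact hMxp.ne_top (Mx.eq_top_of_isUnit_mem hh this)
    have hpbot : p = ⊥ := eq_bot_of_chain_of_no_monic hpp hqp hpq hqmon
    apply hP0
    rw [← IsLocalization.map_comap S (Localization S) P]; change Ideal.map _ p = ⊥; rw [hpbot, Ideal.map_bot]
  haveI : IsDedekindRing (Localization S) := ⟨⟩
  infer_instance
end

section
/- Let $A$ be a commutative ring, $s \in A$, and let $\widehat{B}$ be the $s$-adic completion of a Noetherian ring $B$. If every maximal ideal of $\widehat{B}$ contains $s$ and $\dim \widehat{B} \le 2$, then the localization $D = \widehat{B}_s$ of $\widehat{B}$ at the element $s$ has Krull dimension at most 1. -/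
/-- Auxiliary lemma: if `R` is a commutative ring, `t ∈ R` lies in every maximal ideal,
and `ringKrullDim R ≤ 2`, then the localization away from `t` has Krull dimension `≤ 1`. -/
theorem aux_krullDim_away_le_one (R : Type*) [CommRing R] (t : R)
    (hmax : ∀ m : Ideal R, m.IsMaximal → t ∈ m)
    (hdim : ringKrullDim R ≤ 2) :
    ringKrullDim (Localization.Away t) ≤ 1 := by
  classical
  set D := Localization.Away t
  rcases isEmpty_or_nonempty (PrimeSpectrum D) with h | h
  · rw [ringKrullDim, Order.krullDim_eq_bot]
    exact bot_le
  · rw [ringKrullDim, Order.krullDim_eq_iSup_length]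
    rw [show ((1 : WithBot ℕ∞)) = ((1 : ℕ∞) : WithBot ℕ∞) by rfl, WithBot.coe_le_coe]
    apply iSup_le
    intro p
    -- map the chain to Spec R via comap
    have hinj : Function.Injective (PrimeSpectrum.comap (algebraMap R D)) :=
      PrimeSpectrum.localization_comap_injective D (Submonoid.powers t)
    have hmono : Monotone (PrimeSpectrum.comap (algebraMap R D)) := by
      intro a b hab
      exact Ideal.comap_mono hab
    have hsm : StrictMono (PrimeSpectrum.comap (algebraMap R D)) :=
      hmono.strictMono_of_injective hinj
    set q := p.map _ hsm with hq
    -- t is not in any prime in the image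
    have ht : ∀ x : PrimeSpectrum D, t ∉ (PrimeSpectrum.comap (algebraMap R D) x).asIdeal := by
      intro x hx
      have hu : IsUnit (algebraMap R D t) :=
        IsLocalization.map_units D (⟨t, Submonoid.mem_powers t⟩ : Submonoid.powers t)
      exact x.2.ne_top (x.asIdeal.eq_top_of_isUnit_mem hx hu)
    -- extend the image chain by a maximal ideal
    obtain ⟨m, hm, hle⟩ := q.last.asIdeal.exists_le_maximal q.last.2.ne_top
    have hlt : q.last < ⟨m, hm.isPrime⟩ := by
      refine lt_of_le_of_ne hle ?_
      intro hEq
      have hts : t ∈ q.last.asIdeal := by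
        rw [hEq]; exact hmax m hm
      rw [hq, LTSeries.last_map] at hts
      exact ht _ hts
    have hlen := Order.LTSeries.length_le_krullDim (q.snoc _ hlt)
    rw [← ringKrullDim] at hlen
    have h2 : ((p.length + 1 : ℕ) : WithBot ℕ∞) ≤ 2 := by
      refine le_trans ?_ hdim
      simpa [q, RelSeries.snoc, RelSeries.append, RelSeries.map, RelSeries.singleton] using hlen
    have : p.length + 1 ≤ 2 := by exact_mod_cast h2
    exact_mod_cast Nat.lt_succ_iff.mp (Nat.lt_of_succ_le this)

/-- Let `B` be a Noetherian ring, `s ∈ B`, and let `B̂` be the `s`-adic completion of `B`.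
If every maximal ideal of `B̂` contains (the image of) `s` and `dim B̂ ≤ 2`, then the
localization `D = B̂_s` has Krull dimension at most `1`. -/
theorem krullDim_localization_completion_le_one (B : Type*) [CommRing B]
    [IsNoetherianRing B] (s : B)
    (hmax : ∀ m : Ideal (AdicCompletion (Ideal.span ({s} : Set B)) B), m.IsMaximal →
      algebraMap B (AdicCompletion (Ideal.span ({s} : Set B)) B) s ∈ m)
    (hdim : ringKrullDim (AdicCompletion (Ideal.span ({s} : Set B)) B) ≤ 2) :
    ringKrullDim
      (Localization.Away
        (algebraMap B (AdicCompletion (Ideal.span ({s} : Set B)) B) s)) ≤ 1 := by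
  exact aux_krullDim_away_le_one _ _ hmax hdim
end
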